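/- Let 0 < T⁻ ≤ 1 ≤ T⁺ with T⁺ - 1 - ln T⁺ = T⁻ - 1 - ln T⁻, let N ≥ 1, and let μ₁, …, μ_N be positive reals. Define D(T, t) = (3/2)·∑_{k=1}^N [Λ_k(T,t) - 1 - ln Λ_k(T,t)] with Λ_k(T,t) = 1 + (T-1)·exp(-2μ_k t). Then D(T⁺, t) ≥ D(T⁻, t) for all t ≥ 0, i.e., uphill relaxation of a reversible Ornstein-Uhlenbeck process is at least as fast as downhill relaxation at every time. -/

import Mathlib

private lemma OU_aux (a b : ℝ) (ha : 0 ≤ a) (hb : 0 ≤ b) (hb1 : b < 1)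
    (hc : a - Real.log (1 + a) = -b - Real.log (1 - b)) :
    ∀ s : ℝ, 0 ≤ s → s ≤ 1 →
      -b * s - Real.log (1 - b * s) ≤ a * s - Real.log (1 + a * s) := by
  intro s hs0 hs1
  set g : ℝ → ℝ := fun u => a * u - Real.log (1 + a * u) + b * u + Real.log (1 - b * u) with hg
  suffices h : 0 ≤ g s by
    simp only [hg] at h
    linarith
  have hpos1 : ∀ u : ℝ, 0 ≤ u → (0:ℝ) < 1 + a * u := by
    intro u hu; nlinarith
  have hpos2 : ∀ u : ℝ, 0 ≤ u → u ≤ 1 → (0:ℝ) < 1 - b * u := by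
    intro u hu hu1; nlinarith
  have hderiv : ∀ u : ℝ, 0 ≤ u → u ≤ 1 →
      HasDerivAt g ((u * (a + b) * (a - b - a * b * u)) / ((1 + a * u) * (1 - b * u))) u := by
    intro u hu hu1
    have h1 : (0:ℝ) < 1 + a * u := hpos1 u hu
    have h2 : (0:ℝ) < 1 - b * u := hpos2 u hu hu1
    have d1 : HasDerivAt (fun v : ℝ => 1 + a * v) a u := by
      simpa using ((hasDerivAt_id u).const_mul a).const_add 1
    have d2' : HasDerivAt (fun v : ℝ => 1 - b * v) (-b) u := by
      have := ((hasDerivAt_id u).const_mul b).const_sub 1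
      simpa using this
    have dl1 : HasDerivAt (fun v : ℝ => Real.log (1 + a * v)) (a / (1 + a * u)) u := by
      have := (Real.hasDerivAt_log (ne_of_gt h1)).comp u d1
      simpa [div_eq_inv_mul, Function.comp_def] using this
    have dl2 : HasDerivAt (fun v : ℝ => Real.log (1 - b * v)) (-b / (1 - b * u)) u := by
      have := (Real.hasDerivAt_log (ne_of_gt h2)).comp u d2'
      simpa [div_eq_inv_mul, Function.comp_def] using this
    have dA : HasDerivAt (fun v : ℝ => a * v) a u := by
      simpa using (hasDerivAt_id u).const_mul a
    have dB : HasDerivAt (fun v : ℝ => b * v) b u := by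
      simpa using (hasDerivAt_id u).const_mul b
    have := ((dA.sub dl1).add dB).add dl2
    convert this using 1
    · rfl
    · rfl
    · rfl
    rw [div_eq_iff (mul_pos h1 h2).ne']
    have e1 : a / (1 + a * u) * (1 + a * u) = a := div_mul_cancel₀ _ h1.ne'
    have e2 : -b / (1 - b * u) * (1 - b * u) = -b := div_mul_cancel₀ _ h2.ne'
    linear_combination (1 - b * u) * e1 - (1 + a * u) * e2
  have hcont : ContinuousOn g (Set.Icc 0 1) := fun u hu =>
    (hderiv u hu.1 hu.2).continuousAt.continuousWithinAt
  have hg0 : g 0 = 0 := by simp [hg]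
  have hg1 : g 1 = 0 := by
    simp only [hg, mul_one]
    linarith
  by_cases hcase : 0 ≤ a - b - a * b * s
  · -- g is monotone on [0, s]
    have hmono : MonotoneOn g (Set.Icc 0 s) := by
      apply monotoneOn_of_deriv_nonneg (convex_Icc 0 s)
        (hcont.mono (Set.Icc_subset_Icc le_rfl hs1))
      · intro u hu
        rw [interior_Icc] at hu
        exact ((hderiv u hu.1.le (hu.2.le.trans hs1)).differentiableAt).differentiableWithinAt
      · intro u hu
        rw [interior_Icc] at hu
        rw [(hderiv u hu.1.le (hu.2.le.trans hs1)).deriv]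
        apply div_nonneg
        · have h3 : a - b - a * b * u ≥ a - b - a * b * s := by
            nlinarith [mul_nonneg ha hb, hu.2.le]
          have : 0 ≤ a - b - a * b * u := by linarith
          have h4 : 0 ≤ u * (a + b) := mul_nonneg hu.1.le (by linarith)
          exact mul_nonneg h4 this
        · exact le_of_lt (mul_pos (hpos1 u hu.1.le) (hpos2 u hu.1.le (hu.2.le.trans hs1)))
    have := hmono (Set.left_mem_Icc.mpr hs0) (Set.right_mem_Icc.mpr hs0) hs0
    linarith
  · -- g is antitone on [s, 1]
    push_neg at hcase
    have hanti : AntitoneOn g (Set.Icc s 1) := by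
      apply antitoneOn_of_deriv_nonpos (convex_Icc s 1)
        (hcont.mono (Set.Icc_subset_Icc hs0 le_rfl))
      · intro u hu
        rw [interior_Icc] at hu
        exact ((hderiv u (hs0.trans hu.1.le) hu.2.le).differentiableAt).differentiableWithinAt
      · intro u hu
        rw [interior_Icc] at hu
        rw [(hderiv u (hs0.trans hu.1.le) hu.2.le).deriv]
        apply div_nonpos_of_nonpos_of_nonneg
        · have h3 : a - b - a * b * u ≤ a - b - a * b * s := by
            nlinarith [mul_nonneg ha hb, hu.1.le]
          have h4 : 0 ≤ u * (a + b) := by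
            have : 0 ≤ u := hs0.trans hu.1.le
            positivity
          exact mul_nonpos_of_nonneg_of_nonpos h4 (by linarith)
        · exact le_of_lt (mul_pos (hpos1 u (hs0.trans hu.1.le)) (hpos2 u (hs0.trans hu.1.le) hu.2.le))
    have := hanti (Set.left_mem_Icc.mpr hs1) (Set.right_mem_Icc.mpr hs1) hs1
    linarith

theorem OU_uphill_faster (Tm Tp : ℝ) (hTm : 0 < Tm) (hTm1 : Tm ≤ 1) (hTp1 : 1 ≤ Tp)
    (heq : Tp - 1 - Real.log Tp = Tm - 1 - Real.log Tm)
    (N : ℕ) (hN : 1 ≤ N) (μ : Fin N → ℝ) (hμ : ∀ k, 0 < μ k) :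
    ∀ t : ℝ, 0 ≤ t →
      (3 / 2 : ℝ) * ∑ k, ((1 + (Tp - 1) * Real.exp (-2 * μ k * t)) - 1 -
          Real.log (1 + (Tp - 1) * Real.exp (-2 * μ k * t))) ≥
      (3 / 2 : ℝ) * ∑ k, ((1 + (Tm - 1) * Real.exp (-2 * μ k * t)) - 1 -
          Real.log (1 + (Tm - 1) * Real.exp (-2 * μ k * t))) := by
  intro t ht
  apply mul_le_mul_of_nonneg_left _ (by norm_num : (0:ℝ) ≤ 3 / 2)
  apply Finset.sum_le_sum
  intro k _
  set s : ℝ := Real.exp (-2 * μ k * t) with hsdef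
  have hs0 : 0 ≤ s := (Real.exp_pos _).le
  have hs1 : s ≤ 1 := by
    rw [hsdef]
    apply Real.exp_le_one_iff.mpr
    nlinarith [(hμ k).le]
  have key := OU_aux (Tp - 1) (1 - Tm) (by linarith) (by linarith) (by linarith)
    (by
      have e1 : 1 + (Tp - 1) = Tp := by ring
      have e2 : 1 - (1 - Tm) = Tm := by ring
      rw [e1, e2]; linarith) s hs0 hs1
  have e3 : 1 - (1 - Tm) * s = 1 + (Tm - 1) * s := by ring
  rw [e3] at key
  linarith
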